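/- Let (X,φ) be an expansive dynamical system and fix 0 < ε ≤ ε_X/2. Then the set D_ε = {(x,y) ∈ X × X : Xˢ(x,ε) ∩ Xᵘ(y,ε) ≠ ∅} is closed in X × X, contains the diagonal, and the bracket map [·,·] : D_ε → X defined by [x,y] ∈ Xˢ(x,ε) ∩ Xᵘ(y,ε) is continuous and satisfies [x,x] = x for all x ∈ X. -/

import Mathlib

open Filter Topology Set

namespace Paper

variable {X : Type*} [MetricSpace X] [CompactSpace X]

/-- The `n`-th iterate (for `n : ℤ`) of the homeomorphism `φ`. -/
def It (φ : X ≃ₜ X) (n : ℤ) : X → X := fun x => (φ.toEquiv ^ n) x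

/-- The local stable set `Xˢ(x, ε)`. -/
def locS (φ : X ≃ₜ X) (x : X) (ε : ℝ) : Set X :=
  {y | ∀ n : ℕ, dist (It φ n x) (It φ n y) ≤ ε}

/-- The local unstable set `Xᵘ(x, ε)`. -/
def locU (φ : X ≃ₜ X) (x : X) (ε : ℝ) : Set X :=
  {y | ∀ n : ℕ, dist (It φ (-(n : ℤ)) x) (It φ (-(n : ℤ)) y) ≤ ε}

/-- The set `D_ε` on which the bracket is defined. -/
def Dset (φ : X ≃ₜ X) (ε : ℝ) : Set (X × X) :=
  {p | (locS φ p.1 ε ∩ locU φ p.2 ε).Nonempty}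

/-- `(X, φ)` is expansive with expansiveness constant `εX`. -/
def IsExpansive (φ : X ≃ₜ X) (εX : ℝ) : Prop :=
  0 < εX ∧ ∀ x y : X, (∀ n : ℤ, dist (It φ n x) (It φ n y) ≤ εX) → x = y

/-- The metric is adapted (Fried), with constants `η` and `lam`. -/
def IsAdapted (φ : X ≃ₜ X) (η lam : ℝ) : Prop :=
  0 < η ∧ 0 < lam ∧ lam < 1 ∧
    (∀ x y : X, y ∈ locS φ x η → dist (φ x) (φ y) ≤ lam * dist x y) ∧
    (∀ x y : X, y ∈ locU φ x η → dist (φ.symm x) (φ.symm y) ≤ lam * dist x y)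

/-- `p` is a periodic point of `φ`. -/
def IsPeriodic (φ : X ≃ₜ X) (p : X) : Prop :=
  ∃ n : ℕ, 1 ≤ n ∧ It φ n p = p

/-- `x` is a synchronizing point: `(x, x)` is in the interior of `D_ε` for
some `0 < ε ≤ ε₀`. -/
def IsSyncPt (φ : X ≃ₜ X) (ε₀ : ℝ) (x : X) : Prop :=
  ∃ ε : ℝ, 0 < ε ∧ ε ≤ ε₀ ∧ (x, x) ∈ interior (Dset φ ε)

/-- `(X, φ)` is irreducible. -/
def Irred (φ : X ≃ₜ X) : Prop :=
  ∀ U V : Set X, IsOpen U → IsOpen V → U.Nonempty → V.Nonempty →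
    ∃ n : ℕ, 0 < n ∧ (It φ n '' U ∩ V).Nonempty

/-- `(X, φ)` is mixing. -/
def Mixing (φ : X ≃ₜ X) : Prop :=
  ∀ U V : Set X, IsOpen U → IsOpen V → U.Nonempty → V.Nonempty →
    ∃ N : ℕ, ∀ n : ℕ, N ≤ n → (It φ n '' U ∩ V).Nonempty

/-- Every point of `(X, φ)` is non-wandering. -/
def NonWandering (φ : X ≃ₜ X) : Prop :=
  ∀ x : X, ∀ U ∈ 𝓝 x, ∃ n : ℕ, 0 < n ∧ (It φ n '' U ∩ U).Nonempty

/-- Stable equivalence `x ∼ₛ y`. -/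
def StableEq (φ : X ≃ₜ X) (x y : X) : Prop :=
  Tendsto (fun n : ℕ => dist (It φ n x) (It φ n y)) atTop (𝓝 0)

/-- Unstable equivalence `x ∼ᵤ y`. -/
def UnstableEq (φ : X ≃ₜ X) (x y : X) : Prop :=
  Tendsto (fun n : ℕ => dist (It φ (-(n : ℤ)) x) (It φ (-(n : ℤ)) y)) atTop (𝓝 0)

/-- Local conjugacy `x ∼_lc y`: a homeomorphism `γ : U → V` of open
neighborhoods with `γ x = y` and `sup_{z ∈ U} d(φⁿ z, φⁿ (γ z)) → 0` as
`n → ±∞`. -/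
def LocConj (φ : X ≃ₜ X) (x y : X) : Prop :=
  ∃ (U V : Set X) (γ γinv : X → X),
    IsOpen U ∧ IsOpen V ∧ x ∈ U ∧ y ∈ V ∧ γ x = y ∧
    Set.MapsTo γ U V ∧ Set.MapsTo γinv V U ∧
    (∀ z ∈ U, γinv (γ z) = z) ∧ (∀ w ∈ V, γ (γinv w) = w) ∧
    ContinuousOn γ U ∧ ContinuousOn γinv V ∧
    (∀ ε : ℝ, 0 < ε → ∃ N : ℕ, ∀ n : ℤ, (N : ℤ) ≤ |n| → ∀ z ∈ U,
      dist (It φ n z) (It φ n (γ z)) ≤ ε)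

/-- Stable local conjugacy `x ∼_lcs y`: a homeomorphism of `Xᵘ(x, δ)` onto
its image in `Xᵘ(y, δ')` sending `x` to `y`, uniformly asymptotic in forward
time. -/
def StableLC (φ : X ≃ₜ X) (x y : X) : Prop :=
  ∃ (δ δ' : ℝ) (γ : X → X), 0 < δ ∧ 0 < δ' ∧
    Set.MapsTo γ (locU φ x δ) (locU φ y δ') ∧
    Set.InjOn γ (locU φ x δ) ∧ ContinuousOn γ (locU φ x δ) ∧ γ x = y ∧
    (∀ ε : ℝ, 0 < ε → ∃ N : ℕ, ∀ n : ℕ, N ≤ n → ∀ z ∈ locU φ x δ,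
      dist (It φ n z) (It φ n (γ z)) ≤ ε)

/-- Unstable local conjugacy `x ∼_lcu y`: a homeomorphism of `Xˢ(x, δ)` onto
its image in `Xˢ(y, δ')` sending `x` to `y`, uniformly asymptotic in backward
time. -/
def UnstableLC (φ : X ≃ₜ X) (x y : X) : Prop :=
  ∃ (δ δ' : ℝ) (γ : X → X), 0 < δ ∧ 0 < δ' ∧
    Set.MapsTo γ (locS φ x δ) (locS φ y δ') ∧
    Set.InjOn γ (locS φ x δ) ∧ ContinuousOn γ (locS φ x δ) ∧ γ x = y ∧
    (∀ ε : ℝ, 0 < ε → ∃ N : ℕ, ∀ n : ℕ, N ≤ n → ∀ z ∈ locS φ x δ,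
      dist (It φ (-(n : ℤ)) z) (It φ (-(n : ℤ)) (γ z)) ≤ ε)


lemma continuous_It (φ : X ≃ₜ X) (n : ℤ) : Continuous (It φ n) := by
  induction n using Int.induction_on with
  | zero =>
    have h : It φ 0 = id := by
      funext x
      simp [It]
    rw [h]; exact continuous_id
  | succ k ih =>
    have h : It φ ((k : ℤ) + 1) = It φ k ∘ φ := by
      funext x
      simp [It, zpow_add_one, Equiv.Perm.mul_apply]
    rw [h]; exact ih.comp φ.continuous
  | pred k ih =>
    have h : It φ (-(k : ℤ) - 1) = It φ (-(k : ℤ)) ∘ φ.symm := by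
      funext x
      simp only [It, zpow_sub_one, Equiv.Perm.mul_apply, Function.comp_apply]
      rfl
    rw [h]; exact ih.comp φ.symm.continuous

lemma bracket_unique {φ : X ≃ₜ X} {εX : ℝ} (hexp : IsExpansive φ εX)
    {ε : ℝ} (hε2 : ε ≤ εX / 2) {x y z w : X}
    (hz : z ∈ locS φ x ε ∩ locU φ y ε) (hw : w ∈ locS φ x ε ∩ locU φ y ε) :
    z = w := by
  apply hexp.2
  intro n
  rcases le_or_gt 0 n with h | h
  · obtain ⟨m, rfl⟩ := Int.eq_ofNat_of_zero_le h
    calc dist (It φ m z) (It φ m w)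
        ≤ dist (It φ m z) (It φ m x) + dist (It φ m x) (It φ m w) := dist_triangle _ _ _
      _ ≤ ε + ε := by
          refine add_le_add ?_ (hw.1 m)
          rw [dist_comm]; exact hz.1 m
      _ ≤ εX := by linarith
  · obtain ⟨m, rfl⟩ := Int.exists_eq_neg_ofNat h.le
    calc dist (It φ (-(m : ℤ)) z) (It φ (-(m : ℤ)) w)
        ≤ dist (It φ (-(m : ℤ)) z) (It φ (-(m : ℤ)) y)
          + dist (It φ (-(m : ℤ)) y) (It φ (-(m : ℤ)) w) := dist_triangle _ _ _
      _ ≤ ε + ε := by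
          refine add_le_add ?_ (hw.2 m)
          rw [dist_comm]; exact hz.2 m
      _ ≤ εX := by linarith

lemma isClosed_Sgraph (φ : X ≃ₜ X) (ε : ℝ) :
    IsClosed {q : (X × X) × X | q.2 ∈ locS φ q.1.1 ε ∩ locU φ q.1.2 ε} := by
  have h : {q : (X × X) × X | q.2 ∈ locS φ q.1.1 ε ∩ locU φ q.1.2 ε}
      = (⋂ n : ℕ, {q : (X × X) × X | dist (It φ n q.1.1) (It φ n q.2) ≤ ε})
        ∩ ⋂ n : ℕ, {q : (X × X) × X |
            dist (It φ (-(n : ℤ)) q.1.2) (It φ (-(n : ℤ)) q.2) ≤ ε} := by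
    ext q
    simp only [Set.mem_setOf_eq, Set.mem_inter_iff, Set.mem_iInter, locS, locU]
  rw [h]
  refine IsClosed.inter ?_ ?_ <;> refine isClosed_iInter fun n => ?_
  · exact isClosed_le (Continuous.dist
      ((continuous_It φ n).comp (continuous_fst.comp continuous_fst))
      ((continuous_It φ n).comp continuous_snd)) continuous_const
  · exact isClosed_le (Continuous.dist
      ((continuous_It φ _).comp (continuous_snd.comp continuous_fst))
      ((continuous_It φ _).comp continuous_snd)) continuous_const

/-- `D_ε` is closed, contains the diagonal, and the bracket map
is continuous on `D_ε` with `[x,x] = x`. -/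
theorem Dset_closed_bracket_continuous (φ : X ≃ₜ X) (εX : ℝ)
    (hexp : IsExpansive φ εX) (ε : ℝ) (hε : 0 < ε) (hε2 : ε ≤ εX / 2)
    (br : X → X → X)
    (hbr : ∀ x y : X, (x, y) ∈ Dset φ ε → br x y ∈ locS φ x ε ∩ locU φ y ε) :
    IsClosed (Dset φ ε) ∧ (∀ x : X, (x, x) ∈ Dset φ ε) ∧
      ContinuousOn (fun p : X × X => br p.1 p.2) (Dset φ ε) ∧
      ∀ x : X, br x x = x := by
  have hS := isClosed_Sgraph φ ε
  set S : Set ((X × X) × X) :=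
    {q | q.2 ∈ locS φ q.1.1 ε ∩ locU φ q.1.2 ε} with hSdef
  have hSc : IsCompact S := hS.isCompact
  have hDeq : Dset φ ε = Prod.fst '' S := by
    ext p
    constructor
    · rintro ⟨z, hz⟩; exact ⟨(p, z), hz, rfl⟩
    · rintro ⟨q, hq, rfl⟩; exact ⟨q.2, hq⟩
  have hDclosed : IsClosed (Dset φ ε) := by
    rw [hDeq]; exact (hSc.image continuous_fst).isClosed
  have hdiag : ∀ x : X, (x, x) ∈ Dset φ ε := by
    intro x
    exact ⟨x, fun n => by simp [hε.le], fun n => by simp [hε.le]⟩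
  refine ⟨hDclosed, hdiag, ?_, ?_⟩
  · -- continuity
    rw [continuousOn_iff_continuous_restrict]
    rw [continuous_iff_isClosed]
    intro C hC
    have key : (Dset φ ε).restrict (fun p : X × X => br p.1 p.2) ⁻¹' C
        = Subtype.val ⁻¹' (Prod.fst '' (S ∩ {q : (X × X) × X | q.2 ∈ C})) := by
      ext ⟨p, hp⟩
      simp only [Set.mem_preimage, Set.restrict_apply, Set.mem_image]
      constructor
      · intro h
        exact ⟨(p, br p.1 p.2), ⟨hbr p.1 p.2 hp, h⟩, rfl⟩
      · rintro ⟨q, ⟨hqS, hqC⟩, rfl⟩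
        have h2 := bracket_unique hexp hε2 hqS (hbr q.1.1 q.1.2 hp)
        show br q.1.1 q.1.2 ∈ C
        rw [← h2]; exact hqC
    change IsClosed ((Dset φ ε).restrict (fun p : X × X => br p.1 p.2) ⁻¹' C)
    rw [key]
    have : IsCompact (S ∩ {q : (X × X) × X | q.2 ∈ C}) :=
      (hS.inter (hC.preimage continuous_snd)).isCompact
    exact (this.image continuous_fst).isClosed.preimage continuous_subtype_val
  · intro x
    exact (bracket_unique hexp hε2 (hbr x x (hdiag x))
      ⟨fun n => by simp [hε.le], fun n => by simp [hε.le]⟩)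


end Paper
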